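/- Let τ, h > 0 and σ > 1, and set C_{τ,σ,h} = h^{-(σ-1)/τ}·e^{(σ-1)/σ}·(σ-1)/(τσ). Then there exist constants such that for all k > e: exp{(2^{σ-1}τ)^{-1/(σ-1)}·((σ-1)/σ)^{σ/(σ-1)}·W(C_{τ,σ,h}·ln k)^{-1/(σ-1)}·(ln k)^{σ/(σ-1)}} ≲ e^{T_{τ,σ,h}(k)} ≲ exp{((σ-1)/(τσ))^{1/(σ-1)}·W(C_{τ,σ,h}·ln k)^{-1/(σ-1)}·(ln k)^{σ/(σ-1)}}. -/

import Mathlib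

open Real

lemma expRpow (x y : ℝ) : (Real.exp x) ^ y = Real.exp (x*y) := by
  rw [Real.rpow_def_of_pos (Real.exp_pos x), Real.log_exp]

lemma tan_ineq (σ b r : ℝ) (hσ : 1 ≤ σ) (hb : 0 ≤ b) (hbr : 0 ≤ b + r) :
    b + (σ*b+1) * (Real.exp r - 1) ≤ Real.exp (σ*r) * (b+r) := by
  have hEr := Real.exp_pos r
  have h1 : 1 + (σ-1)*r ≤ Real.exp ((σ-1)*r) := by
    have := Real.add_one_le_exp ((σ-1)*r); linarith
  have h2 : Real.exp (σ*r) = Real.exp r * Real.exp ((σ-1)*r) := by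
    rw [← Real.exp_add]; congr 1; ring
  have h3 : 0 ≤ Real.exp r * (r-1) + 1 := by
    have h4 := Real.add_one_le_exp (-r)
    have h5 : Real.exp r * (1 - r) ≤ Real.exp r * Real.exp (-r) :=
      mul_le_mul_of_nonneg_left (by linarith) hEr.le
    rw [← Real.exp_add, add_neg_cancel, Real.exp_zero] at h5
    nlinarith
  have h5 : Real.exp r * (1+(σ-1)*r) * (b+r) ≤ Real.exp (σ*r) * (b+r) := by
    rw [h2]
    exact mul_le_mul_of_nonneg_right (mul_le_mul_of_nonneg_left h1 hEr.le) hbr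
  have hm : 0 ≤ (σ-1)*b+1 := by nlinarith
  have key : Real.exp r * (1+(σ-1)*r) * (b+r) - b - (σ*b+1)*(Real.exp r - 1)
      = ((σ-1)*b+1)*(Real.exp r*(r-1)+1) + (σ-1)*r^2*Real.exp r := by ring
  have hp1 : 0 ≤ ((σ-1)*b+1)*(Real.exp r*(r-1)+1) := mul_nonneg hm h3
  have hp2 : 0 ≤ (σ-1)*r^2*Real.exp r :=
    mul_nonneg (mul_nonneg (by linarith) (sq_nonneg r)) hEr.le
  linarith

lemma mono_aux (σ : ℝ) (hσ : 0 ≤ σ) {H s q : ℝ} (hH : 0 < H) (hs : 0 < s)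
    (hsq : s ≤ q) (hHq : H ≤ q) :
    s^σ * (Real.log s - Real.log H) ≤ q^σ * (Real.log q - Real.log H) := by
  rcases le_or_gt H s with hcase | hcase
  · have h1 : s^σ ≤ q^σ := Real.rpow_le_rpow hs.le hsq hσ
    have h2 : Real.log H ≤ Real.log s := Real.log_le_log hH hcase
    have h3 : Real.log s ≤ Real.log q := Real.log_le_log hs hsq
    have h4 : 0 ≤ s ^ σ := (Real.rpow_pos_of_pos hs σ).le
    nlinarith
  · have h1 : Real.log s ≤ Real.log H := Real.log_le_log hs hcase.le
    have h2 : Real.log H ≤ Real.log q := Real.log_le_log hH hHq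
    have h4 : 0 ≤ s ^ σ := (Real.rpow_pos_of_pos hs σ).le
    have h5 : 0 ≤ q ^ σ := (Real.rpow_pos_of_pos (lt_of_lt_of_le hH hHq) σ).le
    nlinarith

lemma small_case (σ : ℝ) (hσ : 0 < σ) {H s : ℝ} (hH : 0 < H) (hs : 0 < s) (hsH : s ≤ H) :
    s^σ * (Real.log H - Real.log s) ≤ H^σ / (σ * Real.exp 1) := by
  set u : ℝ := σ * (Real.log H - Real.log s) with hu
  have hu0 : 0 ≤ u := by
    apply mul_nonneg hσ.le; linarith [Real.log_le_log hs hsH]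
  have hsp : s^σ = Real.exp (Real.log H * σ) * Real.exp (-u) := by
    rw [Real.rpow_def_of_pos hs, ← Real.exp_add]; congr 1; rw [hu]; ring
  have hHp : H^σ = Real.exp (Real.log H * σ) := Real.rpow_def_of_pos hH σ
  have hkey : u * Real.exp (-u) ≤ Real.exp (-1 : ℝ) := by
    have h4 := Real.add_one_le_exp (u - 1)
    have h5 : u * Real.exp (-u) ≤ Real.exp (u-1) * Real.exp (-u) :=
      mul_le_mul_of_nonneg_right (by linarith) (Real.exp_pos _).le
    rw [← Real.exp_add] at h5
    calc u * Real.exp (-u) ≤ Real.exp (u - 1 + -u) := h5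
    _ = Real.exp (-1 : ℝ) := by congr 1; ring
  have hE : Real.exp (-1:ℝ) = (Real.exp 1)⁻¹ := by rw [Real.exp_neg]
  have hch : s^σ * (Real.log H - Real.log s)
      = Real.exp (Real.log H * σ) * (u * Real.exp (-u)) / σ := by
    rw [hsp, hu]; field_simp
  rw [hch, hHp]
  rw [div_le_div_iff₀ hσ (by positivity)]
  have h6 : Real.exp (Real.log H * σ) * (u * Real.exp (-u))
      ≤ Real.exp (Real.log H * σ) * (Real.exp 1)⁻¹ := by
    apply mul_le_mul_of_nonneg_left _ (Real.exp_pos _).le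
    rw [← hE]; exact hkey
  calc Real.exp (Real.log H * σ) * (u * Real.exp (-u)) * (σ * Real.exp 1)
      ≤ Real.exp (Real.log H * σ) * (Real.exp 1)⁻¹ * (σ * Real.exp 1) := by
        apply mul_le_mul_of_nonneg_right h6; positivity
    _ = Real.exp (Real.log H * σ) * σ := by field_simp

lemma term_log (τ σ h k : ℝ) (hh : 0 < h) (hτ : 0 < τ) (hk : 0 < k) (p : ℕ) (hp : 1 ≤ p) :
    Real.log (h ^ ((p:ℝ)^σ) * k ^ p / (p:ℝ)^(τ*(p:ℝ)^σ))
      = (p:ℝ)*Real.log k - τ*(p:ℝ)^σ*(Real.log p - Real.log (h^((1:ℝ)/τ))) := by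
  have hp0 : (0:ℝ) < p := by exact_mod_cast Nat.pos_of_ne_zero (by omega)
  have h1 : h ^ ((p:ℝ)^σ) ≠ 0 := (Real.rpow_pos_of_pos hh _).ne'
  have h2 : k ^ p ≠ 0 := (pow_pos hk p).ne'
  have h3 : (p:ℝ)^(τ*(p:ℝ)^σ) ≠ 0 := (Real.rpow_pos_of_pos hp0 _).ne'
  rw [Real.log_div (by positivity) h3, Real.log_mul h1 h2, Real.log_rpow hh,
    Real.log_pow, Real.log_rpow hp0, Real.log_rpow hh]
  field_simp
  ring

lemma rpow_mul_div (a L v e : ℝ) (ha : 0 ≤ a) (hL : 0 ≤ L) (hv : 0 < v) :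
    (a * L / v) ^ e = a^e * L^e / v^e := by
  rw [Real.div_rpow (mul_nonneg ha hL) hv.le, Real.mul_rpow ha hL]

lemma rpow_split (H σ : ℝ) (hH : 0 < H) : H ^ σ = H ^ (σ-1) * H := by
  have e1 : H ^ ((σ-1) + 1) = H ^ (σ-1) * H ^ (1:ℝ) := Real.rpow_add hH _ _
  rw [Real.rpow_one] at e1
  rw [← e1]; congr 1; ring

lemma upper_tangent (σ τ H L b : ℝ) (hσ : 1 < σ) (hτ : 0 < τ) (hH : 0 < H) (hb : 0 ≤ b)
    (hL : L = τ * H^(σ-1) * Real.exp ((σ-1)*b) * (σ*b+1)) :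
    ∀ s : ℝ, H ≤ s →
      s*L - τ * s^σ * (Real.log s - Real.log H)
        ≤ H*Real.exp b*L - τ*(H*Real.exp b)^σ*b := by
  intro s hs
  have hs0 : 0 < s := lt_of_lt_of_le hH hs
  obtain ⟨r, hr⟩ : ∃ r : ℝ, r = Real.log s - Real.log H - b := ⟨_, rfl⟩
  have hbr : 0 ≤ b + r := by
    have := Real.log_le_log hH hs
    rw [hr]; linarith
  have hlog : Real.log s - Real.log H = b + r := by rw [hr]; ring
  have hsr : s = H * Real.exp (b+r) := by
    have h0 : Real.exp (b + r) = s / H := by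
      rw [show b + r = Real.log s - Real.log H by rw [hr]; ring,
        Real.exp_sub, Real.exp_log hs0, Real.exp_log hH]
    rw [h0]; field_simp
  have hpow : s^σ = H^(σ-1) * H * (Real.exp b * Real.exp r
      * (Real.exp ((σ-1)*b) * Real.exp ((σ-1)*r))) := by
    rw [hsr, Real.mul_rpow hH.le (Real.exp_pos _).le, expRpow, rpow_split _ _ hH]
    rw [show (b+r)*σ = b + (r + ((σ-1)*b + (σ-1)*r)) by ring, Real.exp_add,
      Real.exp_add, Real.exp_add]
    ring
  have hpow2 : (H*Real.exp b)^σ = H^(σ-1) * H * (Real.exp b * Real.exp ((σ-1)*b)) := by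
    rw [Real.mul_rpow hH.le (Real.exp_pos _).le, expRpow, rpow_split _ _ hH]
    rw [show b*σ = b + (σ-1)*b by ring, Real.exp_add]
  have key := tan_ineq σ b r hσ.le hb hbr
  have e3 : Real.exp (σ*r) = Real.exp r * Real.exp ((σ-1)*r) := by
    rw [← Real.exp_add]; congr 1; ring
  rw [e3] at key
  have step2 : Real.exp r*(σ*b+1) - Real.exp r * Real.exp ((σ-1)*r)*(b+r)
      ≤ (σ*b+1) - b := by linarith
  have hc : (0:ℝ) ≤ τ * (H^(σ-1)*H) * (Real.exp b * Real.exp ((σ-1)*b)) := by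
    have := Real.rpow_pos_of_pos hH (σ-1); positivity
  have hmain := mul_le_mul_of_nonneg_left step2 hc
  calc s*L - τ * s^σ * (Real.log s - Real.log H)
      = τ * (H^(σ-1)*H) * (Real.exp b * Real.exp ((σ-1)*b)) *
          (Real.exp r*(σ*b+1) - Real.exp r * Real.exp ((σ-1)*r)*(b+r)) := by
        rw [hlog, hpow, hL]
        nth_rewrite 1 [hsr]
        rw [Real.exp_add]
        ring
    _ ≤ τ * (H^(σ-1)*H) * (Real.exp b * Real.exp ((σ-1)*b)) * ((σ*b+1) - b) := hmain
    _ = H*Real.exp b*L - τ*(H*Real.exp b)^σ*b := by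
        rw [hpow2, hL]; ring

/-- The extended associated function
`T_{τ,σ,h}(k) = sup_{p∈ℕ} ln⁺(h^{p^σ} k^p / p^{τ p^σ})`. -/
noncomputable def Tassoc (τ σ h k : ℝ) : ℝ :=
  ⨆ p : ℕ, max 0 (Real.log (h ^ ((p : ℝ) ^ σ) * k ^ p / (p : ℝ) ^ (τ * (p : ℝ) ^ σ)))

set_option maxHeartbeats 2000000 in
/-- two-sided asymptotic bounds for `e^{T_{τ,σ,h}(k)}` in terms of the
Lambert `W` function, with `C_{τ,σ,h} = h^{-(σ-1)/τ}·e^{(σ-1)/σ}·(σ-1)/(τσ)`. -/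
theorem stmt13 (τ σ h : ℝ) (hτ : 0 < τ) (hh : 0 < h) (hσ : 1 < σ)
    (W : ℝ → ℝ)
    (hW_inv : ∀ x : ℝ, 0 ≤ x → W x * Real.exp (W x) = x)
    (hW_nonneg : ∀ x : ℝ, 0 ≤ x → 0 ≤ W x) :
    ∃ c₁ > (0 : ℝ), ∃ c₂ > (0 : ℝ), ∀ k : ℝ, Real.exp 1 < k →
      Real.exp ((2 ^ (σ - 1) * τ) ^ (-(1 / (σ - 1))) * ((σ - 1) / σ) ^ (σ / (σ - 1)) *
            (W ((h ^ (-((σ - 1) / τ)) * Real.exp ((σ - 1) / σ) * ((σ - 1) / (τ * σ))) *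
                Real.log k)) ^ (-(1 / (σ - 1))) *
            (Real.log k) ^ (σ / (σ - 1))) ≤
          c₁ * Real.exp (Tassoc τ σ h k) ∧
        Real.exp (Tassoc τ σ h k) ≤
          c₂ * Real.exp (((σ - 1) / (τ * σ)) ^ (1 / (σ - 1)) *
            (W ((h ^ (-((σ - 1) / τ)) * Real.exp ((σ - 1) / σ) * ((σ - 1) / (τ * σ))) *
                Real.log k)) ^ (-(1 / (σ - 1))) *
            (Real.log k) ^ (σ / (σ - 1))) := by
  have hσ1 : (0:ℝ) < σ - 1 := by linarith
  have hσ0 : (0:ℝ) < σ := by linarith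
  obtain ⟨H, hHdef⟩ : ∃ H : ℝ, H = h ^ ((1:ℝ)/τ) := ⟨_, rfl⟩
  have hH : 0 < H := by rw [hHdef]; exact Real.rpow_pos_of_pos hh _
  set Cc : ℝ := h ^ (-((σ - 1) / τ)) * Real.exp ((σ - 1) / σ) * ((σ - 1) / (τ * σ)) with hCcdef
  have hCc : 0 < Cc := by
    have h1 : (0:ℝ) < h ^ (-((σ - 1) / τ)) := Real.rpow_pos_of_pos hh _
    rw [hCcdef]; positivity
  -- the rounding constant δ
  obtain ⟨δ, hδdef⟩ : ∃ δ : ℝ, δ = ((1/2 : ℝ) ^ (σ⁻¹) - 1/2)/2 := ⟨_, rfl⟩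
  have hhalf : (1/2:ℝ) < (1/2:ℝ) ^ (σ⁻¹) := by
    have h1 : (1/2:ℝ)^(σ⁻¹) > (1/2:ℝ)^(1:ℝ) :=
      Real.rpow_lt_rpow_of_exponent_gt (by norm_num) (by norm_num)
        (by rw [inv_lt_one_iff₀]; right; exact hσ)
    rwa [Real.rpow_one] at h1
  have hδ : 0 < δ := by rw [hδdef]; linarith
  have hδ4 : δ ≤ 1/4 := by
    have h1 : (1/2:ℝ)^(σ⁻¹) ≤ 1 :=
      Real.rpow_le_one (by norm_num) (by norm_num) (inv_nonneg.2 hσ0.le)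
    rw [hδdef]; linarith
  have hδ1 : 1/2 + δ ≤ 1 := by linarith
  have hδ2 : ((1:ℝ)/2 + δ) ^ σ ≤ 1/2 := by
    have h1 : (1/2:ℝ) + δ ≤ (1/2:ℝ)^(σ⁻¹) := by rw [hδdef]; linarith
    have h2 : ((1:ℝ)/2 + δ)^σ ≤ ((1/2:ℝ)^(σ⁻¹))^σ :=
      Real.rpow_le_rpow (by linarith) h1 hσ0.le
    rwa [← Real.rpow_mul (by norm_num), inv_mul_cancel₀ hσ0.ne', Real.rpow_one] at h2
  obtain ⟨R, hRdef⟩ : ∃ R : ℝ, R = max (1/δ) (2*H) := ⟨_, rfl⟩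
  have hR : 0 < R := by
    rw [hRdef]; exact lt_of_lt_of_le (by positivity) (le_max_right _ _)
  obtain ⟨v₁, hv₁def⟩ : ∃ v₁ : ℝ, v₁ = (σ-1)/σ + (σ-1) * max 0 (Real.log (R/H)) := ⟨_, rfl⟩
  have hv₁ : 0 < v₁ := by
    have h1 : 0 ≤ (σ-1) * max 0 (Real.log (R/H)) :=
      mul_nonneg hσ1.le (le_max_left _ _)
    have h2 : (0:ℝ) < (σ-1)/σ := by positivity
    rw [hv₁def]; linarith
  obtain ⟨L₁, hL₁def⟩ : ∃ L₁ : ℝ, L₁ = v₁ * Real.exp v₁ / Cc := ⟨_, rfl⟩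
  have hL₁ : 0 < L₁ := by rw [hL₁def]; positivity
  obtain ⟨P, hPdef⟩ : ∃ P : ℝ, P = max (max (H*Real.exp 1) ((L₁/τ) ^ ((σ-1)⁻¹))) 1 := ⟨_, rfl⟩
  have hP1 : (1:ℝ) ≤ P := by rw [hPdef]; exact le_max_right _ _
  have hP0 : (0:ℝ) < P := lt_of_lt_of_le one_pos hP1
  have hlogP : 0 ≤ Real.log P := Real.log_nonneg hP1
  obtain ⟨K, hKdef⟩ : ∃ K : ℝ, K = τ * H^σ / (σ * Real.exp 1) := ⟨_, rfl⟩
  have hK : 0 < K := by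
    have h1 : (0:ℝ) < H ^ σ := Real.rpow_pos_of_pos hH _
    rw [hKdef]; positivity
  obtain ⟨c₃, hc₃def⟩ : ∃ c₃ : ℝ, c₃ = P*L₁ + τ*P^σ*(Real.log P + |Real.log H|) := ⟨_, rfl⟩
  have hc₃ : 0 ≤ c₃ := by
    have h1 : (0:ℝ) < P ^ σ := Real.rpow_pos_of_pos hP0 _
    rw [hc₃def]; positivity
  obtain ⟨c₄, hc₄def⟩ : ∃ c₄ : ℝ, c₄ = H * Real.exp (v₁/(σ-1)) * L₁ := ⟨_, rfl⟩
  have hc₄ : 0 < c₄ := by rw [hc₄def]; positivity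
  refine ⟨Real.exp c₄, Real.exp_pos _, Real.exp (max K c₃), Real.exp_pos _, ?_⟩
  intro k hk
  have he1 : (1:ℝ) < Real.exp 1 := by
    have := Real.add_one_le_exp (1:ℝ); linarith
  have hk1 : (1:ℝ) < k := lt_trans he1 hk
  have hk0 : (0:ℝ) < k := by linarith
  set L : ℝ := Real.log k with hLdef
  have hL1 : 1 < L := by
    rw [hLdef]; exact (Real.lt_log_iff_exp_lt hk0).2 hk
  have hL0 : 0 < L := by linarith
  set v : ℝ := W (Cc * L) with hvdef
  have hCL : 0 ≤ Cc * L := by positivity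
  have hvev : v * Real.exp v = Cc * L := hW_inv _ hCL
  have hvnn : (0:ℝ) ≤ v := hW_nonneg _ hCL
  have hv0 : 0 < v := by
    rcases hvnn.lt_or_eq with h1 | h1
    · exact h1
    · exfalso
      have h2 : v * Real.exp v = 0 := by rw [← h1]; ring
      rw [hvev] at h2
      have h3 : 0 < Cc * L := mul_pos hCc hL0
      linarith
  obtain ⟨b, hbdef⟩ : ∃ b : ℝ, b = (v - (σ-1)/σ)/(σ-1) := ⟨_, rfl⟩
  have hexpb : (0:ℝ) < Real.exp b := Real.exp_pos b
  obtain ⟨x, hxdef⟩ : ∃ x : ℝ, x = H * Real.exp b := ⟨_, rfl⟩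
  have hx0 : 0 < x := by rw [hxdef]; positivity
  have hb1 : σ*b+1 = σ*v/(σ-1) := by
    rw [hbdef]; field_simp; ring
  have hw0 : 0 < σ*b+1 := by rw [hb1]; positivity
  have hsb : (σ-1)*b = v - (σ-1)/σ := by rw [hbdef]; field_simp
  -- the key identity coming from v e^v = Cc L
  have hy : H^(σ-1) * Real.exp ((σ-1)*b) = (σ-1)*L/(τ*σ*v) := by
    rw [hsb, hHdef, ← Real.rpow_mul hh.le,
      show (1:ℝ)/τ*(σ-1) = (σ-1)/τ by ring]
    rw [eq_div_iff (by positivity)]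
    apply mul_left_cancel₀ hCc.ne'
    have hmulh : h^(-((σ-1)/τ)) * h^((σ-1)/τ) = 1 := by
      rw [← Real.rpow_add hh, neg_add_cancel, Real.rpow_zero]
    have hmule : Real.exp ((σ-1)/σ) * Real.exp (v - (σ-1)/σ) = Real.exp v := by
      rw [← Real.exp_add]; congr 1; ring
    calc Cc * (h^((σ-1)/τ) * Real.exp (v-(σ-1)/σ) * (τ*σ*v))
        = (h^(-((σ-1)/τ)) * h^((σ-1)/τ)) * (Real.exp ((σ-1)/σ) * Real.exp (v-(σ-1)/σ))
            * ((σ-1)/(τ*σ)*(τ*σ)) * v := by rw [hCcdef]; ring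
      _ = Real.exp v * ((σ-1)*v) := by
          rw [hmulh, hmule]; field_simp
      _ = Cc * ((σ-1)*L) := by linear_combination (σ-1) * hvev
  have hLid : L = τ * (H^(σ-1) * Real.exp ((σ-1)*b)) * (σ*b+1) := by
    rw [hy, hb1]; field_simp
  have hLid' : L = τ * H^(σ-1) * Real.exp ((σ-1)*b) * (σ*b+1) := by
    rw [hLid]; ring
  have hxpow : x^σ = H^(σ-1) * H * (Real.exp b * Real.exp ((σ-1)*b)) := by
    rw [hxdef, Real.mul_rpow hH.le (Real.exp_pos _).le, expRpow, rpow_split _ _ hH]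
    rw [show b*σ = b + (σ-1)*b by ring, Real.exp_add]
  have hxσb : τ * x^σ * b = L/(σ*b+1)*x*b := by
    have e : τ * (H^(σ-1)*Real.exp ((σ-1)*b)) = L/(σ*b+1) := by
      rw [hLid]; field_simp
    rw [hxpow, hxdef, ← e]; ring
  have hlogx : Real.log x - Real.log H = b := by
    rw [hxdef, Real.log_mul hH.ne' (Real.exp_pos _).ne', Real.log_exp]; ring
  -- identities for the two exponents in the statement
  have hxe : x = ((σ-1)*L/(τ*σ*v))^((1:ℝ)/(σ-1)) := by
    have h1 : x^(σ-1) = (σ-1)*L/(τ*σ*v) := by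
      rw [hxdef, Real.mul_rpow hH.le (Real.exp_pos _).le, expRpow,
        show b*(σ-1) = (σ-1)*b by ring]
      exact hy
    rw [← h1, ← Real.rpow_mul hx0.le, mul_one_div, div_self hσ1.ne', Real.rpow_one]
  have hsplitL : L^(σ/(σ-1)) = L^(1/(σ-1)) * L := by
    rw [show σ/(σ-1) = 1/(σ-1) + 1 by field_simp; ring, Real.rpow_add hL0, Real.rpow_one]
  have hEQ1 : (σ-1)*L/(τ*σ*v) = ((σ-1)/(τ*σ)) * L / v := by
    field_simp
  have hB : ((σ - 1) / (τ * σ)) ^ (1 / (σ - 1)) * v ^ (-(1 / (σ - 1))) * L ^ (σ / (σ - 1))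
      = x * L := by
    rw [hsplitL, Real.rpow_neg hv0.le, hxe, hEQ1,
      rpow_mul_div _ _ _ _ (div_nonneg hσ1.le (by positivity)) hL0.le hv0]
    ring
  have hA : (2 ^ (σ - 1) * τ) ^ (-(1 / (σ - 1))) * ((σ - 1) / σ) ^ (σ / (σ - 1)) *
      v ^ (-(1 / (σ - 1))) * L ^ (σ / (σ - 1)) = x/2*L*((σ-1)/σ) := by
    have h2 : ((2:ℝ)^(σ-1)*τ) ^ (-(1/(σ-1))) = (1/2) * (τ^((1:ℝ)/(σ-1)))⁻¹ := by
      rw [Real.mul_rpow (by positivity) hτ.le, ← Real.rpow_mul (by norm_num : (0:ℝ) ≤ 2),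
        show (σ-1)*(-(1/(σ-1))) = -1 by field_simp,
        show (-1:ℝ) = -(1:ℝ) by norm_num,
        Real.rpow_neg (by norm_num : (0:ℝ) ≤ 2), Real.rpow_one,
        Real.rpow_neg hτ.le]
      norm_num
    have h3 : ((σ-1)/σ)^(σ/(σ-1)) = ((σ-1)/σ)^((1:ℝ)/(σ-1)) * ((σ-1)/σ) := by
      rw [show σ/(σ-1) = 1/(σ-1) + 1 by field_simp; ring,
        Real.rpow_add (by positivity), Real.rpow_one]
    have hEQ2 : (σ-1)*L/(τ*σ*v) = ((σ-1)/σ) * L / (τ*v) := by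
      field_simp
    have hx2 : ((σ-1)/σ)^((1:ℝ)/(σ-1)) * (τ^((1:ℝ)/(σ-1)))⁻¹ * (v^((1:ℝ)/(σ-1)))⁻¹
        * L^((1:ℝ)/(σ-1)) = x := by
      rw [hxe, hEQ2,
        rpow_mul_div _ _ _ _ (div_nonneg hσ1.le hσ0.le) hL0.le (by positivity),
        Real.mul_rpow hτ.le hv0.le]
      ring
    rw [h2, h3, Real.rpow_neg hv0.le, hsplitL, ← hx2]
    ring
  have hTdef : Tassoc τ σ h k
      = ⨆ p : ℕ, max 0 (Real.log (h ^ ((p : ℝ) ^ σ) * k ^ p / (p : ℝ) ^ (τ * (p : ℝ) ^ σ))) := rfl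
  have hterm0 : Real.log (h ^ (((0:ℕ) : ℝ) ^ σ) * k ^ (0:ℕ) / ((0:ℕ) : ℝ) ^ (τ * ((0:ℕ) : ℝ) ^ σ)) = 0 := by
    simp [Real.zero_rpow hσ0.ne']
  rcases le_or_gt v₁ v with hreg | hreg
  · -- LARGE regime
    have hb0 : 0 ≤ b := by
      have h1 : 0 ≤ (σ-1) * max 0 (Real.log (R/H)) :=
        mul_nonneg hσ1.le (le_max_left _ _)
      rw [hbdef]
      apply div_nonneg _ hσ1.le
      rw [hv₁def] at hreg; linarith
    have hxR : R ≤ x := by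
      have hbM : Real.log (R/H) ≤ b := by
        rw [hbdef, le_div_iff₀ hσ1]
        rw [hv₁def] at hreg
        have h9 := mul_le_mul_of_nonneg_left (le_max_right (0:ℝ) (Real.log (R/H))) hσ1.le
        linarith
      have h2 : R/H ≤ Real.exp b := by
        calc R/H = Real.exp (Real.log (R/H)) := (Real.exp_log (by positivity)).symm
        _ ≤ Real.exp b := Real.exp_le_exp.2 hbM
      calc R = H * (R/H) := by field_simp
      _ ≤ H * Real.exp b := mul_le_mul_of_nonneg_left h2 hH.le
      _ = x := hxdef.symm
    have hx2H : 2*H ≤ x := le_trans (by rw [hRdef]; exact le_max_right _ _) hxR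
    have hxδ : 1/δ ≤ x := le_trans (by rw [hRdef]; exact le_max_left _ _) hxR
    have hHx : H ≤ x := by linarith
    have hub : ∀ p : ℕ,
        max 0 (Real.log (h ^ ((p : ℝ) ^ σ) * k ^ p / (p : ℝ) ^ (τ * (p : ℝ) ^ σ)))
          ≤ x*L + K := by
      intro p
      have hxLpos : 0 < x*L := mul_pos hx0 hL0
      apply max_le (by linarith)
      rcases Nat.eq_zero_or_pos p with rfl | hp
      · rw [hterm0]; linarith
      · have hp1 : (1:ℝ) ≤ (p:ℝ) := by exact_mod_cast hp
        have hp0 : (0:ℝ) < p := by linarith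
        rw [term_log τ σ h k hh hτ hk0 p hp, ← hHdef, ← hLdef]
        rcases le_or_gt H (p:ℝ) with hc | hc
        · have h1 := upper_tangent σ τ H L b hσ hτ hH hb0 hLid' (p:ℝ) hc
          rw [← hxdef] at h1
          have h2 : 0 ≤ τ*x^σ*b :=
            mul_nonneg (mul_nonneg hτ.le (Real.rpow_pos_of_pos hx0 σ).le) hb0
          linarith
        · have hsmall := small_case σ hσ0 hH hp0 hc.le
          have h3 : τ*((p:ℝ)^σ*(Real.log H - Real.log p)) ≤ K := by
            rw [hKdef]
            calc τ*((p:ℝ)^σ*(Real.log H - Real.log p))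
                ≤ τ * (H^σ/(σ*Real.exp 1)) := mul_le_mul_of_nonneg_left hsmall hτ.le
            _ = τ * H^σ / (σ * Real.exp 1) := by ring
          have h4 : (p:ℝ)*L ≤ x*L := mul_le_mul_of_nonneg_right (by linarith) hL0.le
          have heq : (p:ℝ)*L - τ*(p:ℝ)^σ*(Real.log p - Real.log H)
              = (p:ℝ)*L + τ*((p:ℝ)^σ*(Real.log H - Real.log p)) := by ring
          rw [heq]
          linarith
    have hBdd : BddAbove (Set.range fun p : ℕ =>
        max 0 (Real.log (h ^ ((p : ℝ) ^ σ) * k ^ p / (p : ℝ) ^ (τ * (p : ℝ) ^ σ)))) :=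
      ⟨x*L+K, by rintro y ⟨p, rfl⟩; exact hub p⟩
    have hT : Tassoc τ σ h k ≤ x*L + K := by
      rw [hTdef]; exact ciSup_le hub
    constructor
    · -- lower bound
      set p₀ : ℕ := ⌈x/2⌉₊ with hp₀def
      have hp₀l : x/2 ≤ (p₀:ℝ) := Nat.le_ceil _
      have hp₀u : (p₀:ℝ) ≤ x/2 + 1 := le_of_lt (Nat.ceil_lt_add_one (by positivity))
      have hp₀1 : 1 ≤ p₀ := by
        rw [hp₀def]; exact Nat.one_le_ceil_iff.2 (by positivity)
      have hp₀r1 : (1:ℝ) ≤ (p₀:ℝ) := by exact_mod_cast hp₀1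
      have hp₀pos : (0:ℝ) < (p₀:ℝ) := by linarith
      have hδx : 1 ≤ δ * x := by
        rw [div_le_iff₀ hδ] at hxδ; linarith [hxδ]
      have hexpand : (1/2+δ)*x = x/2 + δ*x := by ring
      have hq : (p₀:ℝ) ≤ (1/2+δ)*x := by linarith
      have hδx0 : 0 ≤ δ*x := mul_nonneg hδ.le hx0.le
      have hHq : H ≤ (1/2+δ)*x := by linarith
      have hqx : (1/2+δ)*x ≤ x := by
        have h9 := mul_le_mul_of_nonneg_right hδ1 hx0.le
        linarith
      have hmono := mono_aux σ hσ0.le hH hp₀pos hq hHq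
      have hq2 : ((1/2+δ)*x)^σ*(Real.log ((1/2+δ)*x) - Real.log H)
          ≤ (1/2+δ)^σ * (x^σ*b) := by
        rw [Real.mul_rpow (by linarith : (0:ℝ) ≤ 1/2+δ) hx0.le]
        have hlq : Real.log ((1/2+δ)*x) ≤ Real.log x := Real.log_le_log (by positivity) hqx
        have hc1 : (0:ℝ) ≤ ((1:ℝ)/2+δ)^σ := (Real.rpow_pos_of_pos (by linarith) σ).le
        have hc2 : (0:ℝ) < x^σ := Real.rpow_pos_of_pos hx0 σ
        have hbx : Real.log ((1/2+δ)*x) - Real.log H ≤ b := by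
          rw [← hlogx]; linarith
        have hcc : 0 ≤ (1/2+δ)^σ * x^σ := mul_nonneg hc1 hc2.le
        have h10 := mul_le_mul_of_nonneg_left hbx hcc
        linarith [h10]
      have hc2 : (0:ℝ) < x^σ := Real.rpow_pos_of_pos hx0 σ
      have hxσbb : 0 ≤ x^σ*b := mul_nonneg hc2.le hb0
      have hstep : τ*((p₀:ℝ)^σ*(Real.log p₀ - Real.log H)) ≤ (1/2) * (τ*x^σ*b) := by
        have h5 : τ*((p₀:ℝ)^σ*(Real.log p₀ - Real.log H))
            ≤ τ*((1/2+δ)^σ * (x^σ*b)) :=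
          mul_le_mul_of_nonneg_left (le_trans hmono hq2) hτ.le
        have h6 : τ*((1/2+δ)^σ * (x^σ*b)) ≤ τ*((1/2)*(x^σ*b)) := by
          apply mul_le_mul_of_nonneg_left _ hτ.le
          exact mul_le_mul_of_nonneg_right hδ2 hxσbb
        calc τ*((p₀:ℝ)^σ*(Real.log p₀ - Real.log H)) ≤ τ*((1/2)*(x^σ*b)) :=
              le_trans h5 h6
        _ = (1/2) * (τ*x^σ*b) := by ring
      have hτxb_le : τ*x^σ*b ≤ x*L/σ := by
        rw [hxσb]
        rw [div_mul_eq_mul_div, div_mul_eq_mul_div, div_le_div_iff₀ hw0 hσ0]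
        have h9 : 0 ≤ x*L := (mul_pos hx0 hL0).le
        have h10 : L*x*b*σ + x*L = x*L*(σ*b+1) := by ring
        linarith
      have hφ : x/2*L*((σ-1)/σ) ≤ (p₀:ℝ)*L - τ*(p₀:ℝ)^σ*(Real.log p₀ - Real.log H) := by
        have h7 : x/2*L ≤ (p₀:ℝ)*L := mul_le_mul_of_nonneg_right hp₀l hL0.le
        have h8 : τ*(p₀:ℝ)^σ*(Real.log p₀ - Real.log H) ≤ x*L/(2*σ) := by
          calc τ*(p₀:ℝ)^σ*(Real.log p₀ - Real.log H)
              = τ*((p₀:ℝ)^σ*(Real.log p₀ - Real.log H)) := by ring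
          _ ≤ (1/2) * (τ*x^σ*b) := hstep
          _ ≤ (1/2) * (x*L/σ) := by linarith [hτxb_le]
          _ = x*L/(2*σ) := by ring
        have h9 : x/2*L*((σ-1)/σ) = x/2*L - x*L/(2*σ) := by field_simp
        linarith
      have hterm : x/2*L*((σ-1)/σ)
          ≤ max 0 (Real.log (h ^ ((p₀ : ℝ) ^ σ) * k ^ p₀ / (p₀ : ℝ) ^ (τ * (p₀ : ℝ) ^ σ))) := by
        rw [term_log τ σ h k hh hτ hk0 p₀ hp₀1, ← hHdef, ← hLdef]
        exact le_trans hφ (le_max_right _ _)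
      have hle : x/2*L*((σ-1)/σ) ≤ Tassoc τ σ h k := by
        rw [hTdef]
        exact le_trans hterm (le_ciSup hBdd p₀)
      rw [hA]
      calc Real.exp (x/2*L*((σ-1)/σ)) ≤ Real.exp (Tassoc τ σ h k) := Real.exp_le_exp.2 hle
      _ = 1 * Real.exp (Tassoc τ σ h k) := by ring
      _ ≤ Real.exp c₄ * Real.exp (Tassoc τ σ h k) := by
          apply mul_le_mul_of_nonneg_right _ (Real.exp_pos _).le
          exact Real.one_le_exp hc₄.le
    · -- upper bound
      rw [hB]
      calc Real.exp (Tassoc τ σ h k) ≤ Real.exp (x*L + K) := Real.exp_le_exp.2 hT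
      _ = Real.exp K * Real.exp (x*L) := by rw [← Real.exp_add]; congr 1; ring
      _ ≤ Real.exp (max K c₃) * Real.exp (x*L) := by
          apply mul_le_mul_of_nonneg_right _ (Real.exp_pos _).le
          exact Real.exp_le_exp.2 (le_max_left _ _)
  · -- SMALL regime
    have hLle : L ≤ L₁ := by
      have h1 : v*Real.exp v ≤ v₁*Real.exp v₁ := by
        have h2 : Real.exp v ≤ Real.exp v₁ := Real.exp_le_exp.2 hreg.le
        exact mul_le_mul hreg.le h2 (Real.exp_pos v).le hv₁.le
      rw [hL₁def, le_div_iff₀ hCc]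
      calc L * Cc = Cc * L := by ring
      _ = v * Real.exp v := hvev.symm
      _ ≤ v₁ * Real.exp v₁ := h1
    have hub : ∀ p : ℕ,
        max 0 (Real.log (h ^ ((p : ℝ) ^ σ) * k ^ p / (p : ℝ) ^ (τ * (p : ℝ) ^ σ)))
          ≤ c₃ := by
      intro p
      apply max_le hc₃
      rcases Nat.eq_zero_or_pos p with rfl | hp
      · rw [hterm0]; exact hc₃
      · have hp1 : (1:ℝ) ≤ (p:ℝ) := by exact_mod_cast hp
        have hp0 : (0:ℝ) < p := by linarith
        rw [term_log τ σ h k hh hτ hk0 p hp, ← hHdef, ← hLdef]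
        rcases le_or_gt (p:ℝ) P with hc | hc
        · have h1 : (p:ℝ)^σ ≤ P^σ := Real.rpow_le_rpow hp0.le hc hσ0.le
          have h1' : (0:ℝ) < (p:ℝ)^σ := Real.rpow_pos_of_pos hp0 σ
          have h2 : |Real.log p - Real.log H| ≤ Real.log P + |Real.log H| := by
            have ha := abs_sub (Real.log p) (Real.log H)
            have hb' : |Real.log (p:ℝ)| = Real.log (p:ℝ) := abs_of_nonneg (Real.log_nonneg hp1)
            have hcc : Real.log (p:ℝ) ≤ Real.log P := Real.log_le_log hp0 hc
            calc |Real.log p - Real.log H| ≤ |Real.log (p:ℝ)| + |Real.log H| := ha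
            _ = Real.log (p:ℝ) + |Real.log H| := by rw [hb']
            _ ≤ Real.log P + |Real.log H| := by linarith
          have h3 : -(τ*(p:ℝ)^σ*(Real.log p - Real.log H))
              ≤ τ*P^σ*(Real.log P + |Real.log H|) := by
            have h5 : -(Real.log p - Real.log H) ≤ |Real.log p - Real.log H| :=
              neg_le_abs _
            have h6 : τ*(p:ℝ)^σ*(-(Real.log p - Real.log H))
                ≤ τ*(p:ℝ)^σ*|Real.log p - Real.log H| := by
              apply mul_le_mul_of_nonneg_left h5
              positivity
            have h7 : τ*(p:ℝ)^σ*|Real.log p - Real.log H|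
                ≤ τ*P^σ*(Real.log P + |Real.log H|) := by
              apply mul_le_mul (mul_le_mul_of_nonneg_left h1 hτ.le) h2 (abs_nonneg _)
              positivity
            calc -(τ*(p:ℝ)^σ*(Real.log p - Real.log H))
                = τ*(p:ℝ)^σ*(-(Real.log p - Real.log H)) := by ring
            _ ≤ τ*(p:ℝ)^σ*|Real.log p - Real.log H| := h6
            _ ≤ τ*P^σ*(Real.log P + |Real.log H|) := h7
          have h4 : (p:ℝ)*L ≤ P*L₁ :=
            mul_le_mul hc hLle hL0.le hP0.le
          rw [hc₃def]; linarith
        · -- p > P : the term is ≤ 0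
          have hHeP : H*Real.exp 1 ≤ P := by
            rw [hPdef]; exact le_trans (le_max_left _ _) (le_max_left _ _)
          have hHe : H*Real.exp 1 ≤ (p:ℝ) := le_trans hHeP hc.le
          have h1 : Real.log H + 1 ≤ Real.log p := by
            have h2 : Real.log (H*Real.exp 1) ≤ Real.log (p:ℝ) :=
              Real.log_le_log (by positivity) hHe
            rwa [Real.log_mul hH.ne' (Real.exp_pos _).ne', Real.log_exp] at h2
          have h2 : L₁/τ ≤ (p:ℝ)^(σ-1) := by
            have h3P : (L₁/τ) ^ ((σ-1)⁻¹) ≤ P := by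
              rw [hPdef]; exact le_trans (le_max_right _ _) (le_max_left _ _)
            have h3 : (L₁/τ) ^ ((σ-1)⁻¹) ≤ (p:ℝ) := le_trans h3P hc.le
            have h4 : ((L₁/τ) ^ ((σ-1)⁻¹))^(σ-1) ≤ (p:ℝ)^(σ-1) :=
              Real.rpow_le_rpow (by positivity) h3 hσ1.le
            rwa [← Real.rpow_mul (by positivity), inv_mul_cancel₀ hσ1.ne',
              Real.rpow_one] at h4
          have h3 : (p:ℝ)^σ = (p:ℝ)^(σ-1)*(p:ℝ) := rpow_split _ _ hp0
          have h4 : L₁*(p:ℝ) ≤ τ*(p:ℝ)^σ := by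
            rw [h3]
            calc L₁*(p:ℝ) = τ*(L₁/τ)*(p:ℝ) := by field_simp
            _ ≤ τ*((p:ℝ)^(σ-1))*(p:ℝ) := by
                apply mul_le_mul_of_nonneg_right _ hp0.le
                exact mul_le_mul_of_nonneg_left h2 hτ.le
            _ = τ*((p:ℝ)^(σ-1)*(p:ℝ)) := by ring
          have h5 : τ*(p:ℝ)^σ ≤ τ*(p:ℝ)^σ*(Real.log p - Real.log H) := by
            have h6 : (0:ℝ) ≤ τ*(p:ℝ)^σ := by
              have := Real.rpow_pos_of_pos hp0 σ; positivity
            have h7 := mul_le_mul_of_nonneg_left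
              (show (1:ℝ) ≤ Real.log p - Real.log H by linarith) h6
            rw [mul_one] at h7
            exact h7
          have h6 : (p:ℝ)*L ≤ (p:ℝ)*L₁ := mul_le_mul_of_nonneg_left hLle hp0.le
          linarith
    have hBdd : BddAbove (Set.range fun p : ℕ =>
        max 0 (Real.log (h ^ ((p : ℝ) ^ σ) * k ^ p / (p : ℝ) ^ (τ * (p : ℝ) ^ σ)))) :=
      ⟨c₃, by rintro y ⟨p, rfl⟩; exact hub p⟩
    have hT : Tassoc τ σ h k ≤ c₃ := by
      rw [hTdef]; exact ciSup_le hub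
    have hT0 : 0 ≤ Tassoc τ σ h k := by
      rw [hTdef]
      exact le_trans (le_max_left _ _) (le_ciSup hBdd 0)
    constructor
    · -- lower bound
      rw [hA]
      have hble : b ≤ v₁/(σ-1) := by
        rw [hbdef, div_le_div_iff₀ hσ1 hσ1]
        have h9 : (0:ℝ) < (σ-1)/σ := by positivity
        have h10 : (v - (σ-1)/σ) ≤ v₁ := by linarith
        have h11 := mul_le_mul_of_nonneg_right h10 hσ1.le
        linarith
      have hxle : x ≤ H*Real.exp (v₁/(σ-1)) := by
        rw [hxdef]
        exact mul_le_mul_of_nonneg_left (Real.exp_le_exp.2 hble) hH.le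
      have hfrac : (σ-1)/σ ≤ 1 := by rw [div_le_one hσ0]; linarith
      have hfrac0 : (0:ℝ) ≤ (σ-1)/σ := by positivity
      have hAle : x/2*L*((σ-1)/σ) ≤ c₄ := by
        have s1 : x/2*L*((σ-1)/σ) ≤ x*L := by
          have h9 : 0 ≤ x*L := (mul_pos hx0 hL0).le
          have h10 := mul_le_mul_of_nonneg_left hfrac h9
          rw [mul_one] at h10
          have h11 : x/2*L*((σ-1)/σ) = (x*L*((σ-1)/σ))/2 := by ring
          have h12 : 0 ≤ x*L*((σ-1)/σ) := mul_nonneg h9 hfrac0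
          linarith
        have s2 : x*L ≤ (H*Real.exp (v₁/(σ-1)))*L₁ :=
          mul_le_mul hxle hLle hL0.le (by positivity)
        rw [hc₄def]; linarith
      calc Real.exp (x/2*L*((σ-1)/σ)) ≤ Real.exp c₄ := Real.exp_le_exp.2 hAle
      _ = Real.exp c₄ * 1 := by ring
      _ ≤ Real.exp c₄ * Real.exp (Tassoc τ σ h k) := by
          apply mul_le_mul_of_nonneg_left _ (Real.exp_pos _).le
          exact Real.one_le_exp hT0
    · -- upper bound
      rw [hB]
      have hxL0 : 0 ≤ x*L := (mul_pos hx0 hL0).le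
      calc Real.exp (Tassoc τ σ h k) ≤ Real.exp c₃ := Real.exp_le_exp.2 hT
      _ ≤ Real.exp (max K c₃) := Real.exp_le_exp.2 (le_max_right _ _)
      _ = Real.exp (max K c₃) * 1 := by ring
      _ ≤ Real.exp (max K c₃) * Real.exp (x*L) := by
          apply mul_le_mul_of_nonneg_left _ (Real.exp_pos _).le
          exact Real.one_le_exp hxL0
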